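/- Under the SPPS setup, the series u₂ = Σ_{k≥0} λ^k φ_{2k+1}/(2k+1)! converges uniformly on [a,b] and satisfies u₂'' - q u₂ = λ u₂ on (a,b), with initial conditions u₂(x₀) = 0 and u₂'(x₀) = 1/f(x₀). -/

import Mathlib

set_option maxHeartbeats 1000000

open MeasureTheory Filter Finset

lemma abs_int_pow (x₀ x : ℝ) (n : ℕ) :
    |∫ s in x₀..x, |s - x₀| ^ n| = |x - x₀| ^ (n+1) / (n+1) := by
  rcases le_total x₀ x with h | h
  · have h1 : ∀ s ∈ Set.uIcc x₀ x, |s - x₀| ^ n = (s - x₀) ^ n := by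
      intro s hs
      rw [Set.uIcc_of_le h] at hs
      rw [abs_of_nonneg (by linarith [hs.1])]
    rw [intervalIntegral.integral_congr h1]
    have := intervalIntegral.integral_comp_sub_right (fun s => s ^ n) x₀ (a := x₀) (b := x)
    rw [this, integral_pow]
    simp [abs_of_nonneg, sub_nonneg.2 h, div_nonneg (pow_nonneg (sub_nonneg.2 h) _) (by positivity : (0:ℝ) ≤ (n:ℝ)+1)]
  · have h1 : ∀ s ∈ Set.uIcc x₀ x, |s - x₀| ^ n = (x₀ - s) ^ n := by
      intro s hs
      rw [Set.uIcc_of_ge h] at hs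
      rw [abs_of_nonpos (by linarith [hs.2]), neg_sub]
    rw [intervalIntegral.integral_congr h1]
    have := intervalIntegral.integral_comp_sub_left (fun s => s ^ n) x₀ (a := x₀) (b := x)
    rw [this, integral_pow]
    simp only [sub_self, zero_pow, ne_eq]
    rw [zero_pow (by omega), zero_sub, abs_div, abs_neg, abs_pow]
    rw [abs_of_nonneg (by positivity : (0:ℝ) ≤ (n:ℝ)+1), abs_sub_comm x₀ x]

lemma prim_hasDeriv {a b x₀ : ℝ} (hx₀ : x₀ ∈ Set.Icc a b) {h : ℝ → ℂ}
    (hh : ContinuousOn h (Set.Icc a b)) {x : ℝ} (hx : x ∈ Set.Icc a b) :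
    HasDerivWithinAt (fun y => ∫ s in x₀..y, h s) (h x) (Set.Icc a b) x := by
  haveI : Fact (x ∈ Set.Icc a b) := ⟨hx⟩
  have hint : IntervalIntegrable h volume x₀ x :=
    (hh.mono (Set.uIcc_subset_Icc hx₀ hx)).intervalIntegrable
  have hmeas : StronglyMeasurableAtFilter h (nhdsWithin x (Set.Icc a b)) volume :=
    ⟨Set.Icc a b, self_mem_nhdsWithin, hh.aestronglyMeasurable measurableSet_Icc⟩
  exact intervalIntegral.integral_hasDerivWithinAt_right hint hmeas (hh x hx)

lemma fact_le1 (k : ℕ) : (k.factorial : ℝ) ≤ (2*k+1).factorial := by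
  exact_mod_cast Nat.factorial_le (by omega)

lemma fact_le2 (k : ℕ) : (k.factorial : ℝ) * (2*k+1) ≤ (2*k+1).factorial := by
  have : k.factorial * (2*k+1) ≤ (2*k+1).factorial := by
    rw [Nat.factorial_succ]
    calc k.factorial * (2*k+1) = (2*k+1) * k.factorial := by ring
      _ ≤ (2*k+1) * (2*k).factorial := Nat.mul_le_mul_left _ (Nat.factorial_le (by omega))
  calc (k.factorial : ℝ) * (2*k+1) = ((k.factorial * (2*k+1) : ℕ) : ℝ) := by push_cast; ring
    _ ≤ _ := by exact_mod_cast this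

lemma fact_le3 (k : ℕ) : (k.factorial : ℝ) * ((2*k+1)*(2*k)) ≤ (2*k+1).factorial := by
  have : k.factorial * ((2*k+1)*(2*k)) ≤ (2*k+1).factorial := by
    rcases Nat.eq_zero_or_pos k with rfl | hk
    · simp
    · have h3 : k.factorial ≤ (2*k-1).factorial := Nat.factorial_le (by omega)
      have e1 : 2*k-1+1+1 = 2*k+1 := by omega
      have e2 : 2*k-1+1 = 2*k := by omega
      calc k.factorial * ((2*k+1)*(2*k)) ≤ (2*k-1).factorial * ((2*k+1)*(2*k)) :=
            Nat.mul_le_mul_right _ h3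
        _ = (2*k+1).factorial := by
            conv_rhs => rw [← e1]
            rw [Nat.factorial_succ, Nat.factorial_succ, e1, e2]; ring
  calc (k.factorial : ℝ) * ((2*k+1)*(2*k)) = ((k.factorial * ((2*k+1)*(2*k)) : ℕ) : ℝ) := by
        push_cast; ring
    _ ≤ _ := by exact_mod_cast this

lemma final_step (k : ℕ) (L R K p : ℝ) (hL : 0 ≤ L) (hR : 0 ≤ R) (hK : 0 ≤ K)
    (hp : (k.factorial : ℝ) * p ≤ (2*k+1).factorial) (hp0 : 0 ≤ p) :
    L^k * (p * K * R^(2*k)) / ((2*k+1).factorial : ℝ)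
      ≤ K * (L*R^2)^k / (k.factorial : ℝ) := by
  have hkf : (0:ℝ) < k.factorial := by exact_mod_cast k.factorial_pos
  have hkf2 : (0:ℝ) < (2*k+1).factorial := by exact_mod_cast (2*k+1).factorial_pos
  have h1 : p / ((2*k+1).factorial : ℝ) ≤ 1 / (k.factorial : ℝ) := by
    rw [div_le_div_iff₀ hkf2 hkf]
    nlinarith
  calc L^k * (p * K * R^(2*k)) / ((2*k+1).factorial : ℝ)
      = (L^k * K * R^(2*k)) * (p / ((2*k+1).factorial : ℝ)) := by ring
    _ ≤ (L^k * K * R^(2*k)) * (1 / (k.factorial : ℝ)) := by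
        exact mul_le_mul_of_nonneg_left h1 (by positivity)
    _ = K * (L*R^2)^k / (k.factorial : ℝ) := by
        rw [mul_pow, ← pow_mul]; ring

lemma rec_props {a b x₀ : ℝ} (hx₀ : x₀ ∈ Set.Icc a b) {C : ℝ}
    {w : ℕ → ℝ → ℂ} (hw : ∀ n, ContinuousOn (w n) (Set.Icc a b))
    (hwb : ∀ n, ∀ s ∈ Set.Icc a b, ‖w n s‖ ≤ C)
    {Y : ℕ → ℝ → ℂ} (hY0 : ∀ x, Y 0 x = 1)
    (hYrec : ∀ n x, Y (n+1) x = (n+1 : ℂ) * ∫ s in x₀..x, Y n s * w n s) :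
    ∀ n, ContinuousOn (Y n) (Set.Icc a b) ∧
      ∀ x ∈ Set.Icc a b, ‖Y n x‖ ≤ C ^ n * |x - x₀| ^ n := by
  have hC : 0 ≤ C := le_trans (norm_nonneg _) (hwb 0 x₀ hx₀)
  intro n; induction n with
  | zero =>
    refine ⟨continuousOn_const.congr (fun x _ => hY0 x), fun x hx => by simp [hY0]⟩
  | succ n ih =>
    obtain ⟨hcont, hbd⟩ := ih
    have hcw : ContinuousOn (fun s => Y n s * w n s) (Set.Icc a b) := hcont.mul (hw n)
    have hfun : ∀ x, Y (n+1) x = ((n:ℂ)+1) * ∫ s in x₀..x, Y n s * w n s :=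
      fun x => hYrec n x
    constructor
    · refine ContinuousOn.congr ?_ (fun x hx => hfun x)
      intro x hx
      exact (((prim_hasDeriv hx₀ hcw hx).const_mul ((n:ℂ)+1)).continuousWithinAt)
    · intro x hx
      rw [hfun x, norm_mul]
      have hsub : Set.uIcc x₀ x ⊆ Set.Icc a b := Set.uIcc_subset_Icc hx₀ hx
      have key : ‖∫ s in x₀..x, Y n s * w n s‖
          ≤ |∫ s in x₀..x, C ^ n * |s - x₀| ^ n * C| := by
        apply intervalIntegral.norm_integral_le_abs_of_norm_le
        · refine (ae_restrict_iff' measurableSet_uIoc).2 (ae_of_all _ fun t ht => ?_)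
          have ht' : t ∈ Set.Icc a b := hsub (Set.uIoc_subset_uIcc ht)
          rw [norm_mul]
          exact mul_le_mul (hbd t ht') (hwb n t ht') (norm_nonneg _) (by positivity)
        · apply Continuous.intervalIntegrable
          continuity
      have e1 : |∫ s in x₀..x, C ^ n * |s - x₀| ^ n * C|
          = C ^ (n+1) * (|x - x₀| ^ (n+1) / (n+1)) := by
        have : (∫ s in x₀..x, C ^ n * |s - x₀| ^ n * C)
            = (C ^ n * C) * ∫ s in x₀..x, |s - x₀| ^ n := by
          rw [← intervalIntegral.integral_const_mul]
          congr 1; funext s; ring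
        rw [this, abs_mul, abs_int_pow, abs_of_nonneg (by positivity)]
        ring
      have e2 : ‖((n:ℂ)+1)‖ = (n:ℝ)+1 := by
        have : ((n:ℂ)+1) = ((n+1:ℕ):ℂ) := by push_cast; ring
        rw [this, Complex.norm_natCast]; push_cast; ring
      calc ‖((n:ℂ)+1)‖ * ‖∫ s in x₀..x, Y n s * w n s‖
          ≤ ((n:ℝ)+1) * (C ^ (n+1) * (|x - x₀| ^ (n+1) / (n+1))) := by
            rw [e2, ← e1]; exact mul_le_mul_of_nonneg_left key (by positivity)
        _ = C ^ (n+1) * |x - x₀| ^ (n+1) := by field_simp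

lemma rec_deriv {a b x₀ : ℝ} (hx₀ : x₀ ∈ Set.Icc a b)
    {w : ℕ → ℝ → ℂ} {Y : ℕ → ℝ → ℂ}
    (hYcont : ∀ n, ContinuousOn (Y n) (Set.Icc a b))
    (hwcont : ∀ n, ContinuousOn (w n) (Set.Icc a b))
    (hYrec : ∀ n x, Y (n+1) x = (n+1 : ℂ) * ∫ s in x₀..x, Y n s * w n s)
    (n : ℕ) {x : ℝ} (hx : x ∈ Set.Icc a b) :
    HasDerivWithinAt (Y (n+1)) ((n+1 : ℂ) * (Y n x * w n x)) (Set.Icc a b) x := by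
  have hcw : ContinuousOn (fun s => Y n s * w n s) (Set.Icc a b) :=
    (hYcont n).mul (hwcont n)
  have h2 := (prim_hasDeriv hx₀ hcw hx).const_mul ((n:ℂ)+1)
  exact h2.congr (fun y _ => hYrec n y) (hYrec n x)

noncomputable def gfun (f f' : ℝ → ℂ) (X : ℕ → ℝ → ℂ) (k : ℕ) (x : ℝ) : ℂ :=
  f' x * X (2*k+1) x + f x * ((((2*k : ℕ) : ℂ) + 1) * (X (2*k) x / (f x)^2))

noncomputable def hfun (q f : ℝ → ℂ) (X : ℕ → ℝ → ℂ) (k : ℕ) (x : ℝ) : ℂ :=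
  q x * (f x * X (2*k+1) x) + ((((2*k:ℕ):ℂ) + 1) * ((2*k:ℕ):ℂ)) * (f x * X (2*k-1) x)

/-- SPPS: the series `u₂ = Σ λᵏ φ_{2k+1}/(2k+1)!` converges uniformly on `[a,b]`,
satisfies `u₂'' - q u₂ = λ u₂` on `(a,b)`, and the initial conditions
`u₂(x₀) = 0`, `u₂'(x₀) = 1/f(x₀)`. -/
theorem stmt4
    (a b x₀ : ℝ) (hab : a < b) (hx₀ : x₀ ∈ Set.Icc a b)
    (q f f' f'' : ℝ → ℂ)
    (hq : ContinuousOn q (Set.Icc a b))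
    (hf1 : ∀ x ∈ Set.Icc a b, HasDerivAt f (f' x) x)
    (hf2 : ∀ x ∈ Set.Icc a b, HasDerivAt f' (f'' x) x)
    (hode : ∀ x ∈ Set.Icc a b, f'' x = q x * f x)
    (hfne : ∀ x ∈ Set.Icc a b, f x ≠ 0)
    (X Xt : ℕ → ℝ → ℂ)
    (hX0 : ∀ x, X 0 x = 1) (hXt0 : ∀ x, Xt 0 x = 1)
    (hXrec : ∀ n x, X (n + 1) x
      = (n + 1 : ℂ) * ∫ s in x₀..x, X n s * ((f s) ^ 2) ^ ((-1 : ℤ) ^ (n + 1)))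
    (hXtrec : ∀ n x, Xt (n + 1) x
      = (n + 1 : ℂ) * ∫ s in x₀..x, Xt n s * ((f s) ^ 2) ^ ((-1 : ℤ) ^ n))
    (φ : ℕ → ℝ → ℂ)
    (hφ : ∀ k x, φ k x = if Odd k then f x * X k x else f x * Xt k x)
    (lam : ℂ)
    (u₂ : ℝ → ℂ)
    (hu₂ : ∀ x, u₂ x = ∑' k : ℕ, lam ^ k / ((2 * k + 1).factorial : ℂ) * φ (2 * k + 1) x) :
    TendstoUniformlyOn
      (fun N x => ∑ k ∈ range N, lam ^ k / ((2 * k + 1).factorial : ℂ) * φ (2 * k + 1) x)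
      u₂ atTop (Set.Icc a b)
    ∧ (∀ x ∈ Set.Ioo a b, deriv (deriv u₂) x - q x * u₂ x = lam * u₂ x)
    ∧ u₂ x₀ = 0
    ∧ derivWithin u₂ (Set.Icc a b) x₀ = 1 / f x₀ := by
  -- basic continuity and bounds
  have hfc : ContinuousOn f (Set.Icc a b) :=
    fun x hx => (hf1 x hx).continuousAt.continuousWithinAt
  have hf'c : ContinuousOn f' (Set.Icc a b) :=
    fun x hx => (hf2 x hx).continuousAt.continuousWithinAt
  obtain ⟨M₀, hM₀⟩ := isCompact_Icc.exists_bound_of_continuousOn hfc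
  obtain ⟨M₁, hM₁⟩ := isCompact_Icc.exists_bound_of_continuousOn hf'c
  obtain ⟨Q₀, hQ₀⟩ := isCompact_Icc.exists_bound_of_continuousOn hq
  set M : ℝ := max M₀ (max M₁ 1) with hMdef
  have hM1 : (1:ℝ) ≤ M := le_trans (le_max_right _ _) (le_max_right _ _)
  have hM0 : (0:ℝ) ≤ M := by linarith
  have hfM : ∀ x ∈ Set.Icc a b, ‖f x‖ ≤ M := fun x hx => (hM₀ x hx).trans (le_max_left _ _)
  have hf'M : ∀ x ∈ Set.Icc a b, ‖f' x‖ ≤ M :=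
    fun x hx => (hM₁ x hx).trans (le_trans (le_max_left _ _) (le_max_right _ _))
  set Q : ℝ := max Q₀ 0 with hQdef
  have hQ0 : (0:ℝ) ≤ Q := le_max_right _ _
  have hqQ : ∀ x ∈ Set.Icc a b, ‖q x‖ ≤ Q := fun x hx => (hQ₀ x hx).trans (le_max_left _ _)
  obtain ⟨z, hz, hzmin⟩ :=
    isCompact_Icc.exists_isMinOn (Set.nonempty_Icc.2 hab.le) hfc.norm
  set m : ℝ := ‖f z‖ with hmdef
  have hm : 0 < m := norm_pos_iff.2 (hfne z hz)
  have hmle : ∀ x ∈ Set.Icc a b, m ≤ ‖f x‖ := fun x hx => hzmin hx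
  set C : ℝ := max (M^2) ((m^2)⁻¹) with hCdef
  have hC0 : (0:ℝ) ≤ C := le_trans (by positivity) (le_max_left _ _)
  -- weight bounds
  have hwb : ∀ (j : ℕ) (s : ℝ), s ∈ Set.Icc a b → ‖((f s)^2) ^ ((-1:ℤ)^j)‖ ≤ C := by
    intro j s hs
    rcases Nat.even_or_odd j with he | ho
    · rw [he.neg_one_pow, zpow_one]
      calc ‖f s^2‖ = ‖f s‖^2 := norm_pow _ 2
        _ ≤ M^2 := pow_le_pow_left₀ (norm_nonneg _) (hfM s hs) 2
        _ ≤ C := le_max_left _ _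
    · rw [ho.neg_one_pow, zpow_neg_one, norm_inv, norm_pow]
      have h1 : m^2 ≤ ‖f s‖^2 := pow_le_pow_left₀ hm.le (hmle s hs) 2
      calc (‖f s‖^2)⁻¹ ≤ (m^2)⁻¹ := by
            apply inv_anti₀ (by positivity) h1
        _ ≤ C := le_max_right _ _
  have hwc : ∀ (j : ℕ), ContinuousOn (fun s => ((f s)^2) ^ ((-1:ℤ)^j)) (Set.Icc a b) := by
    intro j
    rcases Nat.even_or_odd j with he | ho
    · simp only [he.neg_one_pow, zpow_one]
      exact hfc.pow 2
    · simp only [ho.neg_one_pow, zpow_neg_one]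
      exact (hfc.pow 2).inv₀ (fun s hs => pow_ne_zero 2 (hfne s hs))
  -- recursion properties for X
  have hXall := rec_props (w := fun n s => ((f s)^2) ^ ((-1:ℤ)^(n+1))) hx₀
    (fun n => hwc (n+1)) (fun n => hwb (n+1)) hX0 hXrec
  have hXc : ∀ n, ContinuousOn (X n) (Set.Icc a b) := fun n => (hXall n).1
  have hXb : ∀ n, ∀ x ∈ Set.Icc a b, ‖X n x‖ ≤ C ^ n * |x - x₀| ^ n := fun n => (hXall n).2
  have hXd : ∀ n, ∀ x ∈ Set.Icc a b, HasDerivWithinAt (X (n+1))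
      ((n+1 : ℂ) * (X n x * ((f x)^2) ^ ((-1:ℤ)^(n+1)))) (Set.Icc a b) x :=
    fun n x hx => rec_deriv (w := fun n s => ((f s)^2) ^ ((-1:ℤ)^(n+1))) hx₀ hXc
      (fun n => hwc (n+1)) hXrec n hx
  set R : ℝ := max (C*(b-a)) 1 with hRdef
  have hR1 : (1:ℝ) ≤ R := le_max_right _ _
  have hR0 : (0:ℝ) ≤ R := by linarith
  have hXR : ∀ n, ∀ x ∈ Set.Icc a b, ‖X n x‖ ≤ R ^ n := by
    intro n x hx
    have h2 : |x - x₀| ≤ b - a := by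
      rw [abs_le]; constructor
      · linarith [hx.1, hx₀.2]
      · linarith [hx.2, hx₀.1]
    calc ‖X n x‖ ≤ C^n * |x-x₀|^n := hXb n x hx
      _ = (C*|x-x₀|)^n := (mul_pow _ _ _).symm
      _ ≤ R^n := by
          apply pow_le_pow_left₀ (by positivity)
          exact le_trans (mul_le_mul_of_nonneg_left h2 hC0) (le_max_left _ _)
  have hXzero : ∀ n, X (n+1) x₀ = 0 := fun n => by
    rw [hXrec]; simp
  have hexpodd : ∀ k:ℕ, ((-1:ℤ)^(2*k+1)) = -1 := fun k => Odd.neg_one_pow ⟨k, by ring⟩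
  have hexpeven : ∀ k:ℕ, ((-1:ℤ)^(2*k)) = 1 := fun k => Even.neg_one_pow ⟨k, by ring⟩
  have hφodd : ∀ k x, φ (2*k+1) x = f x * X (2*k+1) x := by
    intro k x; rw [hφ, if_pos ⟨k, by ring⟩]
  -- first derivative of φ (2k+1)
  have hφd : ∀ k, ∀ x ∈ Set.Icc a b,
      HasDerivWithinAt (φ (2*k+1)) (gfun f f' X k x) (Set.Icc a b) x := by
    intro k x hx
    have hX' := hXd (2*k) x hx
    rw [hexpodd k, zpow_neg_one] at hX'
    have hd := HasDerivWithinAt.mul ((hf1 x hx).hasDerivWithinAt (s := Set.Icc a b)) hX'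
    have hd2 := hd.congr (fun y _ => hφodd k y) (hφodd k x)
    exact hd2.congr_deriv (by simp only [gfun, div_eq_mul_inv])
  -- derivative of X (2k)
  have hX2kd : ∀ k, ∀ x ∈ Set.Icc a b,
      HasDerivWithinAt (X (2*k)) (((2*k:ℕ):ℂ) * (X (2*k-1) x * (f x)^2)) (Set.Icc a b) x := by
    intro k x hx
    rcases Nat.eq_zero_or_pos k with rfl | hk
    · have h0 : HasDerivWithinAt (X 0) 0 (Set.Icc a b) x :=
        (hasDerivWithinAt_const x _ (1:ℂ)).congr (fun y _ => hX0 y) (hX0 x)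
      simpa using h0
    · have e : 2*k-1+1 = 2*k := by omega
      have hX' := hXd (2*k-1) x hx
      rw [e, hexpeven k, zpow_one] at hX'
      have e2 : ((2*k-1:ℕ):ℂ) + 1 = ((2*k:ℕ):ℂ) := by
        rw [← e]; push_cast; ring
      rw [← e2]
      exact hX'
  -- second derivative
  have hgd : ∀ k, ∀ x ∈ Set.Icc a b,
      HasDerivWithinAt (gfun f f' X k) (hfun q f X k x) (Set.Icc a b) x := by
    intro k x hx
    have hfx := hfne x hx
    have hfd := (hf1 x hx).hasDerivWithinAt (s := Set.Icc a b)
    have hf'd := (hf2 x hx).hasDerivWithinAt (s := Set.Icc a b)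
    have hX1 := hXd (2*k) x hx
    rw [hexpodd k, zpow_neg_one] at hX1
    have hX2 := hX2kd k x hx
    have hsq : HasDerivWithinAt (fun y => (f y)^2) (f' x * f x + f x * f' x)
        (Set.Icc a b) x :=
      (hfd.mul hfd).congr (fun y _ => pow_two (f y)) (pow_two (f x))
    have hmul1 := hX2.fun_div hsq (pow_ne_zero 2 hfx)
    have hmul2 := hmul1.const_mul (((2*k:ℕ):ℂ)+1)
    have hmul3 := hfd.mul hmul2
    have hterm1 := hf'd.mul hX1
    have htot := hterm1.add hmul3
    have : gfun f f' X k = fun y =>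
        f' y * X (2*k+1) y + f y * ((((2*k:ℕ):ℂ)+1) * (X (2*k) y / (f y)^2)) := rfl
    rw [this]
    refine htot.congr_deriv ?_
    simp only [hfun]
    rw [hode x hx]
    field_simp
    ring
  have hgc : ∀ k, ContinuousOn (gfun f f' X k) (Set.Icc a b) :=
    fun k x hx => (hgd k x hx).continuousWithinAt
  have hφcont : ∀ k, ContinuousOn (φ (2*k+1)) (Set.Icc a b) :=
    fun k x hx => (hφd k x hx).continuousWithinAt
  -- norm of coefficients
  have hnormc : ∀ k : ℕ, ‖lam^k / ((2*k+1).factorial : ℂ)‖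
      = ‖lam‖^k / ((2*k+1).factorial : ℝ) := by
    intro k
    rw [norm_div, norm_pow]
    congr 1
    exact_mod_cast Complex.norm_natCast _
  have hnc : ∀ j:ℕ, ‖((j:ℕ):ℂ)+1‖ = (j:ℝ)+1 := by
    intro j
    have : ((j:ℂ)+1) = ((j+1:ℕ):ℂ) := by push_cast; ring
    rw [this, Complex.norm_natCast]; push_cast; ring
  -- term bounds
  have hb1 : ∀ (k:ℕ) (x:ℝ), x ∈ Set.Icc a b →
      ‖lam^k / ((2*k+1).factorial : ℂ) * φ (2*k+1) x‖
        ≤ (M*R) * (‖lam‖*R^2)^k / (k.factorial : ℝ) := by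
    intro k x hx
    rw [norm_mul, hnormc, hφodd, norm_mul]
    have h1 : ‖f x‖ * ‖X (2*k+1) x‖ ≤ M * R^(2*k+1) :=
      mul_le_mul (hfM x hx) (hXR _ x hx) (norm_nonneg _) hM0
    calc ‖lam‖^k / ((2*k+1).factorial:ℝ) * (‖f x‖ * ‖X (2*k+1) x‖)
        ≤ ‖lam‖^k / ((2*k+1).factorial:ℝ) * (M * R^(2*k+1)) :=
          mul_le_mul_of_nonneg_left h1 (by positivity)
      _ = ‖lam‖^k * (1 * (M*R) * R^(2*k)) / ((2*k+1).factorial:ℝ) := by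
          rw [pow_succ]; ring
      _ ≤ (M*R) * (‖lam‖*R^2)^k / (k.factorial:ℝ) :=
          final_step k _ R (M*R) 1 (norm_nonneg _) hR0 (by positivity)
            (by simpa using fact_le1 k) zero_le_one
  have hb2 : ∀ (k:ℕ) (x:ℝ), x ∈ Set.Icc a b →
      ‖lam^k / ((2*k+1).factorial : ℂ) * gfun f f' X k x‖
        ≤ (M*R + M*(m^2)⁻¹) * (‖lam‖*R^2)^k / (k.factorial : ℝ) := by
    intro k x hx
    rw [norm_mul, hnormc]
    have hc1 : (1:ℝ) ≤ ((2*k:ℕ):ℝ)+1 := by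
      have : (0:ℝ) ≤ ((2*k:ℕ):ℝ) := Nat.cast_nonneg _
      linarith
    have e0 : ‖gfun f f' X k x‖
        ≤ ‖f' x‖ * ‖X (2*k+1) x‖
          + ‖f x‖ * ((((2*k:ℕ):ℝ)+1) * (‖X (2*k) x‖ / ‖f x‖^2)) := by
      simp only [gfun]
      refine le_trans (norm_add_le _ _) ?_
      rw [norm_mul, norm_mul, norm_mul, norm_div, norm_pow, hnc (2*k)]
    have e1 : ‖f' x‖ * ‖X (2*k+1) x‖ ≤ (((2*k:ℕ):ℝ)+1) * ((M*R) * R^(2*k)) := by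
      calc ‖f' x‖ * ‖X (2*k+1) x‖ ≤ M * R^(2*k+1) :=
            mul_le_mul (hf'M x hx) (hXR _ x hx) (norm_nonneg _) hM0
        _ = 1 * ((M*R) * R^(2*k)) := by rw [pow_succ]; ring
        _ ≤ (((2*k:ℕ):ℝ)+1) * ((M*R) * R^(2*k)) := by
            apply mul_le_mul_of_nonneg_right hc1 (by positivity)
    have e2 : ‖f x‖ * ((((2*k:ℕ):ℝ)+1) * (‖X (2*k) x‖ / ‖f x‖^2))
        ≤ (((2*k:ℕ):ℝ)+1) * ((M*(m^2)⁻¹) * R^(2*k)) := by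
      have hdiv : ‖X (2*k) x‖ / ‖f x‖^2 ≤ R^(2*k) / m^2 :=
        div_le_div₀ (by positivity) (hXR _ x hx) (by positivity)
          (pow_le_pow_left₀ hm.le (hmle x hx) 2)
      calc ‖f x‖ * ((((2*k:ℕ):ℝ)+1) * (‖X (2*k) x‖ / ‖f x‖^2))
          ≤ M * ((((2*k:ℕ):ℝ)+1) * (R^(2*k) / m^2)) := by
            refine mul_le_mul (hfM x hx) ?_ (by positivity) hM0
            exact mul_le_mul_of_nonneg_left hdiv (by positivity)
        _ = (((2*k:ℕ):ℝ)+1) * ((M*(m^2)⁻¹) * R^(2*k)) := by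
            field_simp
    have e3 : ‖gfun f f' X k x‖
        ≤ (((2*k:ℕ):ℝ)+1) * ((M*R + M*(m^2)⁻¹) * R^(2*k)) := by
      calc ‖gfun f f' X k x‖ ≤ _ := e0
        _ ≤ (((2*k:ℕ):ℝ)+1) * ((M*R) * R^(2*k))
            + (((2*k:ℕ):ℝ)+1) * ((M*(m^2)⁻¹) * R^(2*k)) := add_le_add e1 e2
        _ = (((2*k:ℕ):ℝ)+1) * ((M*R + M*(m^2)⁻¹) * R^(2*k)) := by ring
    calc ‖lam‖^k / ((2*k+1).factorial:ℝ) * ‖gfun f f' X k x‖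
        ≤ ‖lam‖^k / ((2*k+1).factorial:ℝ)
            * ((((2*k:ℕ):ℝ)+1) * ((M*R + M*(m^2)⁻¹) * R^(2*k))) :=
          mul_le_mul_of_nonneg_left e3 (by positivity)
      _ = ‖lam‖^k * ((((2*k:ℕ):ℝ)+1) * (M*R + M*(m^2)⁻¹) * R^(2*k))
            / ((2*k+1).factorial:ℝ) := by ring
      _ ≤ (M*R + M*(m^2)⁻¹) * (‖lam‖*R^2)^k / (k.factorial:ℝ) := by
          refine final_step k _ R _ _ (norm_nonneg _) hR0 (by positivity) ?_ (by positivity)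
          push_cast
          exact fact_le2 k
  have hb3 : ∀ (k:ℕ) (x:ℝ), x ∈ Set.Icc a b →
      ‖lam^k / ((2*k+1).factorial : ℂ) * hfun q f X k x‖
        ≤ (Q*M*R + M*R) * (‖lam‖*R^2)^k / (k.factorial : ℝ) := by
    intro k x hx
    rw [norm_mul, hnormc]
    have hp1 : ‖q x * (f x * X (2*k+1) x)‖ ≤ 1 * (Q*M*R) * R^(2*k) := by
      rw [norm_mul, norm_mul]
      calc ‖q x‖ * (‖f x‖ * ‖X (2*k+1) x‖)
          ≤ Q * (M * R^(2*k+1)) := by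
            refine mul_le_mul (hqQ x hx) ?_ (by positivity) hQ0
            exact mul_le_mul (hfM x hx) (hXR _ x hx) (norm_nonneg _) hM0
        _ = 1 * (Q*M*R) * R^(2*k) := by rw [pow_succ]; ring
    have hp2 : ‖((((2*k:ℕ):ℂ)+1) * ((2*k:ℕ):ℂ)) * (f x * X (2*k-1) x)‖
        ≤ ((((2*k:ℕ):ℝ)+1) * ((2*k:ℕ):ℝ)) * ((M*R) * R^(2*k)) := by
      rw [norm_mul, norm_mul, norm_mul, hnc (2*k), Complex.norm_natCast]
      have hXle : ‖X (2*k-1) x‖ ≤ R^(2*k) := by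
        calc ‖X (2*k-1) x‖ ≤ R^(2*k-1) := hXR _ x hx
          _ ≤ R^(2*k) := pow_le_pow_right₀ hR1 (by omega)
      have hMR : M ≤ M*R := le_mul_of_one_le_right hM0 hR1
      refine mul_le_mul_of_nonneg_left ?_ (by positivity)
      calc ‖f x‖ * ‖X (2*k-1) x‖ ≤ M * R^(2*k) :=
            mul_le_mul (hfM x hx) hXle (norm_nonneg _) hM0
        _ ≤ (M*R) * R^(2*k) := mul_le_mul_of_nonneg_right hMR (by positivity)
    have hsplit : ‖hfun q f X k x‖
        ≤ 1 * (Q*M*R) * R^(2*k) + ((((2*k:ℕ):ℝ)+1) * ((2*k:ℕ):ℝ)) * ((M*R) * R^(2*k)) := by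
      simp only [hfun]
      exact le_trans (norm_add_le _ _) (add_le_add hp1 hp2)
    have t1 : ‖lam‖^k * (1 * (Q*M*R) * R^(2*k)) / ((2*k+1).factorial:ℝ)
        ≤ (Q*M*R) * (‖lam‖*R^2)^k / (k.factorial:ℝ) :=
      final_step k _ R (Q*M*R) 1 (norm_nonneg _) hR0 (by positivity)
        (by simpa using fact_le1 k) zero_le_one
    have t2 : ‖lam‖^k * (((((2*k:ℕ):ℝ)+1) * ((2*k:ℕ):ℝ)) * (M*R) * R^(2*k))
          / ((2*k+1).factorial:ℝ)
        ≤ (M*R) * (‖lam‖*R^2)^k / (k.factorial:ℝ) := by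
      refine final_step k _ R _ _ (norm_nonneg _) hR0 (by positivity) ?_ (by positivity)
      have := fact_le3 k
      push_cast at this ⊢
      linarith
    calc ‖lam‖^k / ((2*k+1).factorial:ℝ) * ‖hfun q f X k x‖
        ≤ ‖lam‖^k / ((2*k+1).factorial:ℝ)
            * (1 * (Q*M*R) * R^(2*k) + ((((2*k:ℕ):ℝ)+1) * ((2*k:ℕ):ℝ)) * ((M*R) * R^(2*k))) :=
          mul_le_mul_of_nonneg_left hsplit (by positivity)
      _ = ‖lam‖^k * (1 * (Q*M*R) * R^(2*k)) / ((2*k+1).factorial:ℝ)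
            + ‖lam‖^k * (((((2*k:ℕ):ℝ)+1) * ((2*k:ℕ):ℝ)) * (M*R) * R^(2*k))
              / ((2*k+1).factorial:ℝ) := by ring
      _ ≤ (Q*M*R) * (‖lam‖*R^2)^k / (k.factorial:ℝ)
            + (M*R) * (‖lam‖*R^2)^k / (k.factorial:ℝ) := add_le_add t1 t2
      _ = (Q*M*R + M*R) * (‖lam‖*R^2)^k / (k.factorial:ℝ) := by ring
  have hsummable : ∀ (K : ℝ), Summable (fun k : ℕ => K * (‖lam‖*R^2)^k / (k.factorial : ℝ)) := by
    intro K
    simpa [mul_div_assoc] using (Real.summable_pow_div_factorial (‖lam‖*R^2)).mul_left K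
  -- summability of the complex series
  have hsumφ : ∀ x ∈ Set.Icc a b,
      Summable (fun k : ℕ => lam^k / ((2*k+1).factorial : ℂ) * φ (2*k+1) x) := by
    intro x hx
    refine Summable.of_norm (Summable.of_nonneg_of_le (fun k => norm_nonneg _)
      (fun k => hb1 k x hx) (hsummable _))
  have hsumg : ∀ x ∈ Set.Icc a b,
      Summable (fun k : ℕ => lam^k / ((2*k+1).factorial : ℂ) * gfun f f' X k x) := by
    intro x hx
    refine Summable.of_norm (Summable.of_nonneg_of_le (fun k => norm_nonneg _)
      (fun k => hb2 k x hx) (hsummable _))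
  have hsumh : ∀ x ∈ Set.Icc a b,
      Summable (fun k : ℕ => lam^k / ((2*k+1).factorial : ℂ) * hfun q f X k x) := by
    intro x hx
    refine Summable.of_norm (Summable.of_nonneg_of_le (fun k => norm_nonneg _)
      (fun k => hb3 k x hx) (hsummable _))
  -- uniform convergences
  have huφ : TendstoUniformlyOn
      (fun N x => ∑ k ∈ range N, lam^k / ((2*k+1).factorial : ℂ) * φ (2*k+1) x)
      (fun x => ∑' k : ℕ, lam^k / ((2*k+1).factorial : ℂ) * φ (2*k+1) x)
      atTop (Set.Icc a b) :=
    tendstoUniformlyOn_tsum_nat (hsummable _) hb1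
  set G : ℝ → ℂ := fun y => ∑' k : ℕ, lam^k / ((2*k+1).factorial : ℂ) * gfun f f' X k y
    with hGdef
  set H : ℝ → ℂ := fun y => ∑' k : ℕ, lam^k / ((2*k+1).factorial : ℂ) * hfun q f X k y
    with hHdef
  have hug : TendstoUniformlyOn
      (fun N x => ∑ k ∈ range N, lam^k / ((2*k+1).factorial : ℂ) * gfun f f' X k x)
      G atTop (Set.Icc a b) :=
    tendstoUniformlyOn_tsum_nat (hsummable _) hb2
  have huh : TendstoUniformlyOn
      (fun N x => ∑ k ∈ range N, lam^k / ((2*k+1).factorial : ℂ) * hfun q f X k x)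
      H atTop (Set.Icc a b) :=
    tendstoUniformlyOn_tsum_nat (hsummable _) hb3
  -- partial sums have the expected derivatives within Icc
  have hSder : ∀ (N:ℕ), ∀ x ∈ Set.Icc a b, HasDerivWithinAt
      (fun y => ∑ k ∈ range N, lam^k / ((2*k+1).factorial : ℂ) * φ (2*k+1) y)
      (∑ k ∈ range N, lam^k / ((2*k+1).factorial : ℂ) * gfun f f' X k x)
      (Set.Icc a b) x := by
    intro N x hx
    exact HasDerivWithinAt.fun_sum (fun k _ => (hφd k x hx).const_mul _)
  have hS'der : ∀ (N:ℕ), ∀ x ∈ Set.Icc a b, HasDerivWithinAt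
      (fun y => ∑ k ∈ range N, lam^k / ((2*k+1).factorial : ℂ) * gfun f f' X k y)
      (∑ k ∈ range N, lam^k / ((2*k+1).factorial : ℂ) * hfun q f X k x)
      (Set.Icc a b) x := by
    intro N x hx
    exact HasDerivWithinAt.fun_sum (fun k _ => (hgd k x hx).const_mul _)
  have hIccmem : ∀ x ∈ Set.Ioo a b, Set.Icc a b ∈ nhds x := fun x hx =>
    Filter.mem_of_superset (isOpen_Ioo.mem_nhds hx) Set.Ioo_subset_Icc_self
  -- first derivative of u₂ on Ioo
  have hd1 : ∀ x ∈ Set.Ioo a b, HasDerivAt u₂ (G x) x := by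
    intro x hx
    refine hasDerivAt_of_tendstoUniformlyOn
      (f := fun N y => ∑ k ∈ range N, lam^k / ((2*k+1).factorial : ℂ) * φ (2*k+1) y)
      isOpen_Ioo (hug.mono Set.Ioo_subset_Icc_self) ?_ ?_ hx
    · filter_upwards with N y hy
      exact (hSder N y (Set.Ioo_subset_Icc_self hy)).hasDerivAt (hIccmem y hy)
    · intro y hy
      have := (hsumφ y (Set.Ioo_subset_Icc_self hy)).hasSum.tendsto_sum_nat
      rwa [← hu₂ y] at this
  have hd2 : ∀ x ∈ Set.Ioo a b, HasDerivAt G (H x) x := by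
    intro x hx
    refine hasDerivAt_of_tendstoUniformlyOn
      (f := fun N y => ∑ k ∈ range N, lam^k / ((2*k+1).factorial : ℂ) * gfun f f' X k y)
      isOpen_Ioo (huh.mono Set.Ioo_subset_Icc_self) ?_ ?_ hx
    · filter_upwards with N y hy
      exact (hS'der N y (Set.Ioo_subset_Icc_self hy)).hasDerivAt (hIccmem y hy)
    · intro y hy
      exact (hsumg y (Set.Ioo_subset_Icc_self hy)).hasSum.tendsto_sum_nat
  -- the tsum identity H = q u₂ + lam u₂ on Icc
  have hHid : ∀ x ∈ Set.Icc a b, H x = q x * u₂ x + lam * u₂ x := by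
    intro x hx
    have hsφ := hsumφ x hx
    have hsh := hsumh x hx
    have hs1 : Summable (fun k:ℕ => q x * (lam^k/((2*k+1).factorial:ℂ) * φ (2*k+1) x)) :=
      hsφ.mul_left _
    have he : ∀ k:ℕ, lam^k/((2*k+1).factorial:ℂ) * hfun q f X k x
        - q x * (lam^k/((2*k+1).factorial:ℂ) * φ (2*k+1) x)
        = lam^k/((2*k+1).factorial:ℂ) * ((((2*k:ℕ):ℂ)+1) * ((2*k:ℕ):ℂ))
            * (f x * X (2*k-1) x) := by
      intro k; simp only [hfun]; rw [hφodd]; ring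
    have hs2' : Summable (fun k:ℕ => lam^k/((2*k+1).factorial:ℂ)
        * ((((2*k:ℕ):ℂ)+1) * ((2*k:ℕ):ℂ)) * (f x * X (2*k-1) x)) :=
      (hsh.sub hs1).congr he
    have hji : ∀ j:ℕ, lam^(j+1)/((2*(j+1)+1).factorial:ℂ)
        * ((((2*(j+1):ℕ):ℂ)+1) * ((2*(j+1):ℕ):ℂ)) * (f x * X (2*(j+1)-1) x)
        = lam * (lam^j/((2*j+1).factorial:ℂ) * φ (2*j+1) x) := by
      intro j
      have e1 : 2*(j+1)-1 = 2*j+1 := by omega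
      rw [e1, hφodd]
      have e2 : ((2*(j+1)+1).factorial : ℂ)
          = ((2*(j+1)+1 : ℕ) : ℂ) * (((2*(j+1) : ℕ) : ℂ) * ((2*j+1).factorial : ℂ)) := by
        have e3 : 2*(j+1)+1 = (2*j+1)+1+1 := by omega
        rw [e3, Nat.factorial_succ, Nat.factorial_succ]
        push_cast; ring
      rw [e2]
      have hne2 : ((2*(j+1)+1 : ℕ) : ℂ) ≠ 0 := Nat.cast_ne_zero.2 (by omega)
      have hne3 : ((2*(j+1) : ℕ) : ℂ) ≠ 0 := Nat.cast_ne_zero.2 (by omega)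
      have e4 : ((2*(j+1):ℕ):ℂ) + 1 = ((2*(j+1)+1 : ℕ):ℂ) := by push_cast; ring
      rw [e4]
      have hu : ((2*(j+1)+1:ℕ):ℂ) * ((2*(j+1):ℕ):ℂ) ≠ 0 := mul_ne_zero hne2 hne3
      have e5 : lam^(j+1) / (((2*(j+1)+1:ℕ):ℂ) * (((2*(j+1):ℕ):ℂ) * ((2*j+1).factorial:ℂ)))
            * (((2*(j+1)+1:ℕ):ℂ) * ((2*(j+1):ℕ):ℂ)) * (f x * X (2*j+1) x)
          = (((2*(j+1)+1:ℕ):ℂ) * ((2*(j+1):ℕ):ℂ)) * (lam * lam^j)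
            / ((((2*(j+1)+1:ℕ):ℂ) * ((2*(j+1):ℕ):ℂ)) * ((2*j+1).factorial:ℂ))
            * (f x * X (2*j+1) x) := by
        rw [pow_succ]; ring
      rw [e5, mul_div_mul_left _ _ hu]
      ring
    have hHx : H x = ∑' k:ℕ, (q x * (lam^k/((2*k+1).factorial:ℂ) * φ (2*k+1) x)
        + lam^k/((2*k+1).factorial:ℂ) * ((((2*k:ℕ):ℂ)+1) * ((2*k:ℕ):ℂ))
            * (f x * X (2*k-1) x)) := by
      simp only [hHdef]
      exact tsum_congr (fun k => by simp only [hfun]; rw [hφodd]; ring)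
    rw [hHx, Summable.tsum_add hs1 hs2', tsum_mul_left, ← hu₂ x, Summable.tsum_eq_zero_add hs2']
    have h0 : lam^0/((2*0+1).factorial:ℂ) * ((((2*0:ℕ):ℂ)+1) * ((2*0:ℕ):ℂ))
        * (f x * X (2*0-1) x) = 0 := by norm_num
    rw [h0, zero_add, tsum_congr hji, tsum_mul_left, ← hu₂ x]
  -- partial sums vanish at x₀
  have hφzero : ∀ k, φ (2*k+1) x₀ = 0 := by
    intro k
    rw [hφodd, hXzero (2*k)]
    ring
  have hu₂x₀ : u₂ x₀ = 0 := by
    rw [hu₂]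
    have : ∀ k:ℕ, lam^k / ((2*k+1).factorial : ℂ) * φ (2*k+1) x₀ = 0 := by
      intro k; rw [hφzero k]; ring
    simp only [this, tsum_zero]
  -- integral representation of u₂ on Icc
  have hGcont : ContinuousOn G (Set.Icc a b) := by
    refine hug.continuousOn (Filter.Eventually.frequently ?_)
    filter_upwards with N
    exact continuousOn_finset_sum _ (fun k _ => continuousOn_const.mul (hgc k))
  have hrepr : ∀ x ∈ Set.Icc a b, u₂ x = ∫ s in x₀..x, G s := by
    intro x hx
    have hsub : Set.uIcc x₀ x ⊆ Set.Icc a b := Set.uIcc_subset_Icc hx₀ hx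
    have hT1 : Tendsto (fun N => ∑ k ∈ range N, lam^k/((2*k+1).factorial:ℂ) * φ (2*k+1) x)
        atTop (nhds (u₂ x)) := by
      have := (hsumφ x hx).hasSum.tendsto_sum_nat
      rwa [← hu₂ x] at this
    have hSx₀ : ∀ N:ℕ, (∑ k ∈ range N, lam^k/((2*k+1).factorial:ℂ) * φ (2*k+1) x₀) = 0 := by
      intro N
      apply Finset.sum_eq_zero
      intro k _
      rw [hφzero k]; ring
    have hSint : ∀ N:ℕ, IntervalIntegrable
        (fun y => ∑ k ∈ range N, lam^k/((2*k+1).factorial:ℂ) * gfun f f' X k y)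
        volume x₀ x := fun N =>
      ((continuousOn_finset_sum _ (fun k _ => continuousOn_const.mul (hgc k))).mono
        hsub).intervalIntegrable
    have hGint : IntervalIntegrable G volume x₀ x := (hGcont.mono hsub).intervalIntegrable
    have hFTC : ∀ N:ℕ, (∫ s in x₀..x, ∑ k ∈ range N,
          lam^k/((2*k+1).factorial:ℂ) * gfun f f' X k s)
        = ∑ k ∈ range N, lam^k/((2*k+1).factorial:ℂ) * φ (2*k+1) x := by
      intro N
      have hcontS : ContinuousOn
          (fun y => ∑ k ∈ range N, lam^k/((2*k+1).factorial:ℂ) * φ (2*k+1) y)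
          (Set.uIcc x₀ x) :=
        (continuousOn_finset_sum _ (fun k _ => continuousOn_const.mul (hφcont k))).mono hsub
      have hderivS : ∀ y ∈ Set.Ioo (min x₀ x) (max x₀ x),
          HasDerivWithinAt
            (fun y => ∑ k ∈ range N, lam^k/((2*k+1).factorial:ℂ) * φ (2*k+1) y)
            (∑ k ∈ range N, lam^k/((2*k+1).factorial:ℂ) * gfun f f' X k y)
            (Set.Ioi y) y := by
        intro y hy
        have hyIoo : y ∈ Set.Ioo a b :=
          ⟨lt_of_le_of_lt (le_min hx₀.1 hx.1) hy.1,
           lt_of_lt_of_le hy.2 (max_le hx₀.2 hx.2)⟩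
        exact (((hSder N y (Set.Ioo_subset_Icc_self hyIoo)).hasDerivAt
          (hIccmem y hyIoo)).hasDerivWithinAt)
      rw [intervalIntegral.integral_eq_sub_of_hasDeriv_right hcontS hderivS (hSint N),
        hSx₀ N, sub_zero]
    have h2 : |x - x₀| ≤ b - a := by
      rw [abs_le]; constructor
      · linarith [hx.1, hx₀.2]
      · linarith [hx.2, hx₀.1]
    have hba : (0:ℝ) < b - a := sub_pos.2 hab
    have hT2 : Tendsto
        (fun N => ∫ s in x₀..x, ∑ k ∈ range N, lam^k/((2*k+1).factorial:ℂ) * gfun f f' X k s)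
        atTop (nhds (∫ s in x₀..x, G s)) := by
      rw [← tendsto_sub_nhds_zero_iff, NormedAddCommGroup.tendsto_nhds_zero]
      intro ε hε
      have hδ : 0 < ε / (b - a + 1) := div_pos hε (by linarith)
      filter_upwards [Metric.tendstoUniformlyOn_iff.1 hug (ε/(b-a+1)) hδ] with N hN
      have hbnd : ∀ y ∈ Set.uIoc x₀ x,
          ‖(∑ k ∈ range N, lam^k/((2*k+1).factorial:ℂ) * gfun f f' X k y) - G y‖
            ≤ ε/(b-a+1) := by
        intro y hy
        have hyI : y ∈ Set.Icc a b := hsub (Set.uIoc_subset_uIcc hy)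
        have := hN y hyI
        rw [dist_comm, dist_eq_norm] at this
        exact this.le
      have hle : ‖(∫ s in x₀..x, ∑ k ∈ range N,
            lam^k/((2*k+1).factorial:ℂ) * gfun f f' X k s) - ∫ s in x₀..x, G s‖
          ≤ ε/(b-a+1) * |x - x₀| := by
        rw [← intervalIntegral.integral_sub (hSint N) hGint]
        exact intervalIntegral.norm_integral_le_of_norm_le_const hbnd
      have hlt : ε/(b-a+1) * |x - x₀| < ε := by
        have h3 : ε/(b-a+1) * |x - x₀| ≤ ε/(b-a+1) * (b-a) :=
          mul_le_mul_of_nonneg_left h2 hδ.le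
        have h4 : ε/(b-a+1) * (b-a) < ε := by
          rw [div_mul_eq_mul_div, div_lt_iff₀ (by linarith)]
          nlinarith
        linarith
      exact lt_of_le_of_lt hle hlt
    exact (tendsto_nhds_unique (hT2.congr hFTC) hT1).symm
  -- G at x₀
  have hGx₀ : G x₀ = 1 / f x₀ := by
    simp only [hGdef]
    rw [Summable.tsum_eq_zero_add (hsumg x₀ hx₀)]
    have hz : ∀ j:ℕ, lam^(j+1)/((2*(j+1)+1).factorial:ℂ) * gfun f f' X (j+1) x₀ = 0 := by
      intro j
      simp only [gfun]
      rw [hXzero (2*(j+1))]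
      rw [show 2*(j+1) = (2*j+1)+1 from by omega, hXzero (2*j+1)]
      ring
    rw [tsum_congr hz, tsum_zero]
    simp only [gfun]
    rw [hXzero (2*0)]
    have h00 : X (2*0) x₀ = 1 := hX0 x₀
    rw [h00]
    have hne := hfne x₀ hx₀
    norm_num [Nat.factorial]
    field_simp
  refine ⟨?_, ?_, hu₂x₀, ?_⟩
  · have hu₂' : u₂ = fun x => ∑' k : ℕ, lam^k / ((2*k+1).factorial : ℂ) * φ (2*k+1) x :=
      funext hu₂
    rw [hu₂']
    exact huφ
  · intro x hx
    have hxI : x ∈ Set.Icc a b := Set.Ioo_subset_Icc_self hx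
    have e1 : deriv u₂ =ᶠ[nhds x] G := by
      refine Filter.eventuallyEq_of_mem (isOpen_Ioo.mem_nhds hx) ?_
      intro y hy
      exact (hd1 y hy).deriv
    have e2 : deriv (deriv u₂) x = deriv G x := e1.deriv_eq
    have e3 : deriv G x = H x := (hd2 x hx).deriv
    rw [e2, e3, hHid x hxI]
    ring
  · have hEqOn : Set.EqOn u₂ (fun y => ∫ s in x₀..y, G s) (Set.Icc a b) :=
      fun y hy => hrepr y hy
    rw [derivWithin_congr hEqOn (hrepr x₀ hx₀)]
    rw [(prim_hasDeriv hx₀ hGcont hx₀).derivWithin (uniqueDiffOn_Icc hab x₀ hx₀)]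
    exact hGx₀
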